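/- Let G_1 be an r_1-regular graph with m_1 edges and let G_2 be an r_2-regular graph with n_2 vertices. Then every real number λ ≠ r_2 that is an adjacency eigenvalue of G_2 with multiplicity k is an adjacency eigenvalue of the T-edge neighbourhood corona G_1 ⊟_T G_2 with multiplicity at least m_1·k. -/

import Mathlib

open Finset Matrix Polynomial

/-- The vertex-edge incidence matrix `R(G)` of a graph `G`: rows indexed by vertices,
columns indexed by edges, with entry `1` exactly when the vertex is incident with the edge. -/
def incMat {V : Type*} [DecidableEq V] (G : SimpleGraph V) : Matrix V G.edgeSet ℝ :=
  Matrix.of fun v e => if v ∈ (e : Sym2 V) then (1 : ℝ) else 0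

/-- The `M`-coronal `Γ_M(x)`: the sum of all entries of `(xI - M)⁻¹`. -/
noncomputable def coronal {n : Type*} [Fintype n] [DecidableEq n]
    (M : Matrix n n ℝ) (x : ℝ) : ℝ :=
  ∑ i, ∑ j, (x • (1 : Matrix n n ℝ) - M)⁻¹ i j

/-- The T-vertex neighbourhood corona `G₁ ⊡_T G₂`: the disjoint union of the T-graph
`T(G₁)` (on `V₁ ⊕ E(G₁)`) and one copy of `G₂` for each vertex of `G₁`, where every
vertex of the `i`-th copy of `G₂` is joined to every neighbour of `vᵢ` in `T(G₁)`,
i.e. to every vertex of `G₁` adjacent to `vᵢ` and to every edge of `G₁` incident with `vᵢ`. -/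
def tVertexCorona {V₁ V₂ : Type*} (G₁ : SimpleGraph V₁) (G₂ : SimpleGraph V₂) :
    SimpleGraph (V₁ ⊕ (G₁.edgeSet ⊕ V₁ × V₂)) :=
  SimpleGraph.fromRel fun a b =>
    match a, b with
    | Sum.inl u, Sum.inl v => G₁.Adj u v
    | Sum.inl u, Sum.inr (Sum.inl e) => u ∈ (e : Sym2 V₁)
    | Sum.inl u, Sum.inr (Sum.inr iw) => G₁.Adj u iw.1
    | Sum.inr (Sum.inl e), Sum.inr (Sum.inl f) => ∃ v, v ∈ (e : Sym2 V₁) ∧ v ∈ (f : Sym2 V₁)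
    | Sum.inr (Sum.inl e), Sum.inr (Sum.inr iw) => iw.1 ∈ (e : Sym2 V₁)
    | Sum.inr (Sum.inr iw), Sum.inr (Sum.inr jw) => iw.1 = jw.1 ∧ G₂.Adj iw.2 jw.2
    | _, _ => False

/-- The T-edge neighbourhood corona `G₁ ⊟_T G₂`: the disjoint union of the T-graph
`T(G₁)` (on `V₁ ⊕ E(G₁)`) and one copy of `G₂` for each edge of `G₁`, where every
vertex of the `i`-th copy of `G₂` is joined to the two endpoints of the edge `eᵢ`
(as vertices of `G₁` inside `T(G₁)`). -/
def tEdgeCorona {V₁ V₂ : Type*} (G₁ : SimpleGraph V₁) (G₂ : SimpleGraph V₂) :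
    SimpleGraph (V₁ ⊕ (G₁.edgeSet ⊕ G₁.edgeSet × V₂)) :=
  SimpleGraph.fromRel fun a b =>
    match a, b with
    | Sum.inl u, Sum.inl v => G₁.Adj u v
    | Sum.inl u, Sum.inr (Sum.inl e) => u ∈ (e : Sym2 V₁)
    | Sum.inl u, Sum.inr (Sum.inr ew) => u ∈ (ew.1 : Sym2 V₁)
    | Sum.inr (Sum.inl e), Sum.inr (Sum.inl f) => ∃ v, v ∈ (e : Sym2 V₁) ∧ v ∈ (f : Sym2 V₁)
    | Sum.inr (Sum.inr ew), Sum.inr (Sum.inr fw) => ew.1 = fw.1 ∧ G₂.Adj ew.2 fw.2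
    | _, _ => False

noncomputable instance {V₁ V₂ : Type*} (G₁ : SimpleGraph V₁) (G₂ : SimpleGraph V₂) :
    DecidableRel (tVertexCorona G₁ G₂).Adj := Classical.decRel _

noncomputable instance {V₁ V₂ : Type*} (G₁ : SimpleGraph V₁) (G₂ : SimpleGraph V₂) :
    DecidableRel (tEdgeCorona G₁ G₂).Adj := Classical.decRel _

noncomputable instance {V : Type*} (G : SimpleGraph V) :
    DecidableRel (G.lineGraph).Adj := Classical.decRel _


section Charpoly

variable {n R : Type*} [Fintype n] [DecidableEq n] [CommRing R]

lemma charpoly_mul_mul (P A Q : Matrix n n R) (h1 : P * Q = 1) :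
    (P * A * Q).charpoly = A.charpoly := by
  let φ : Matrix n n R →+* Matrix n n R[X] := RingHom.mapMatrix (C : R →+* R[X])
  have key : charmatrix (P * A * Q) = φ P * charmatrix A * φ Q := by
    have hc : Commute (Matrix.scalar n (X : R[X])) (φ Q) :=
      scalar_commute _ (fun r' => Commute.all _ _) _
    have e1 : φ P * Matrix.scalar n (X : R[X]) * φ Q = Matrix.scalar n (X : R[X]) := by
      calc φ P * Matrix.scalar n (X : R[X]) * φ Q
          = φ P * (Matrix.scalar n (X : R[X]) * φ Q) := by rw [mul_assoc]
        _ = φ P * (φ Q * Matrix.scalar n (X : R[X])) := by rw [hc.eq]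
        _ = (φ P * φ Q) * Matrix.scalar n (X : R[X]) := by rw [mul_assoc]
        _ = Matrix.scalar n (X : R[X]) := by
            rw [← _root_.map_mul, h1, _root_.map_one φ, one_mul]
    have e2 : φ P * (φ A) * φ Q = φ (P * A * Q) := by
      rw [← _root_.map_mul, ← _root_.map_mul]
    rw [charmatrix, charmatrix, mul_sub, sub_mul, e1]
    show _ = _ - φ P * φ A * φ Q
    rw [e2]
  rw [Matrix.charpoly, Matrix.charpoly, key, det_mul, det_mul]
  have : det (φ P) * det (φ Q) = 1 := by
    rw [← det_mul, ← _root_.map_mul, h1, _root_.map_one φ, det_one]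
  calc det (φ P) * det (charmatrix A) * det (φ Q)
      = det (φ P) * det (φ Q) * det (charmatrix A) := by ring
    _ = det (charmatrix A) := by rw [this, one_mul]

lemma charpoly_diagonal (d : n → R) :
    (Matrix.diagonal d).charpoly = ∏ i, (X - C (d i)) := by
  have : charmatrix (Matrix.diagonal d) = Matrix.diagonal fun i => X - C (d i) := by
    ext i j
    by_cases h : i = j
    · subst h; simp
    · simp [h]
  rw [Matrix.charpoly, this, det_diagonal]

end Charpoly

section Herm

variable {n : Type*} [Fintype n] [DecidableEq n]

lemma herm_charpoly {A : Matrix n n ℝ} (hA : A.IsHermitian) :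
    A.charpoly = ∏ i, (X - C (hA.eigenvalues i)) := by
  have hU : (hA.eigenvectorUnitary : Matrix n n ℝ) * (star (hA.eigenvectorUnitary : Matrix n n ℝ)) = 1 := by
    exact (Matrix.mem_unitaryGroup_iff).mp hA.eigenvectorUnitary.2
  have hd : (RCLike.ofReal ∘ hA.eigenvalues : n → ℝ) = hA.eigenvalues := by
    funext i; simp
  conv_lhs => rw [hA.spectral_theorem]
  rw [Unitary.conjStarAlgAut_apply, charpoly_mul_mul _ _ _ hU, hd, _root_.charpoly_diagonal]

lemma herm_rootMultiplicity {A : Matrix n n ℝ} (hA : A.IsHermitian) (μ : ℝ) :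
    A.charpoly.rootMultiplicity μ = Nat.card {i // hA.eigenvalues i = μ} := by
  classical
  have hne : A.charpoly ≠ 0 := A.charpoly_monic.ne_zero
  rw [← Polynomial.count_roots, herm_charpoly hA]
  have : (∏ i, (X - C (hA.eigenvalues i))) =
      ((Finset.univ.val.map hA.eigenvalues).map fun a => X - C a).prod := by
    rw [Multiset.map_map]; rfl
  rw [this, Polynomial.roots_multiset_prod_X_sub_C]
  rw [Multiset.count_map]
  rw [Nat.card_eq_fintype_card, Fintype.card_subtype]
  congr 1
  simp [Finset.filter, eq_comm]

end Herm


lemma finrank_ker_eq_card {K M ι : Type*} [Field K] [AddCommGroup M] [Module K M]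
    [Fintype ι] (f : M →ₗ[K] M) (b : Module.Basis ι K M) (μs : ι → K)
    (hfb : ∀ i, f (b i) = μs i • b i) (μ : K) :
    Module.finrank K (LinearMap.ker (f - μ • LinearMap.id)) = Nat.card {i // μs i = μ} := by
  classical
  set s : Set ι := {i | μs i = μ} with hs
  have hker : LinearMap.ker (f - μ • LinearMap.id) = Submodule.span K (⇑b '' s) := by
    apply le_antisymm
    · intro v hv
      rw [LinearMap.mem_ker, LinearMap.sub_apply, sub_eq_zero, LinearMap.smul_apply,
        LinearMap.id_apply] at hv
      rw [Module.Basis.mem_span_image]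
      intro i hi
      simp only [Finset.mem_coe, Finsupp.mem_support_iff] at hi
      by_contra his
      apply hi
      have e1 : f v = ∑ j, (μs j * b.repr v j) • b j := by
        conv_lhs => rw [← b.sum_repr v]
        rw [map_sum]
        simp only [LinearMap.map_smul, hfb, smul_smul]
        exact Finset.sum_congr rfl fun j _ => by rw [mul_comm]
      have e2 : μ • v = ∑ j, (μ * b.repr v j) • b j := by
        conv_lhs => rw [← b.sum_repr v]
        rw [Finset.smul_sum]
        simp only [smul_smul]
      have heq : ∀ j, μs j * b.repr v j = μ * b.repr v j := by
        intro j
        have h3 := (e1.symm.trans (hv.trans e2))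
        have := congrArg (fun w => b.repr w j) h3
        simpa only [b.repr_sum_self] using this
      have h4 : (μs i - μ) * b.repr v i = 0 := by
        rw [sub_mul, heq i, sub_self]
      rcases mul_eq_zero.1 h4 with h | h
      · exact absurd (sub_eq_zero.1 h) his
      · exact h
    · rw [Submodule.span_le]
      rintro _ ⟨i, hi, rfl⟩
      rw [SetLike.mem_coe, LinearMap.mem_ker, LinearMap.sub_apply, hfb i, hi,
        LinearMap.smul_apply, LinearMap.id_apply, sub_self]
  rw [hker, Set.image_eq_range]
  have hli : LinearIndependent K (fun x : s => b ↑x) :=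
    b.linearIndependent.comp _ Subtype.val_injective
  rw [finrank_span_eq_card hli]
  rw [Nat.card_eq_fintype_card]
  exact Fintype.card_congr (Equiv.subtypeEquivRight fun i => Iff.rfl)

lemma herm_card_eq_finrank {n : Type*} [Fintype n] [DecidableEq n]
    {A : Matrix n n ℝ} (hA : A.IsHermitian) (μ : ℝ) :
    Nat.card {i // hA.eigenvalues i = μ} =
      Module.finrank ℝ (LinearMap.ker (A.mulVecLin - μ • LinearMap.id)) := by
  classical
  let b : Module.Basis n ℝ (n → ℝ) :=
    (hA.eigenvectorBasis.toBasis).map (WithLp.linearEquiv 2 ℝ (n → ℝ))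
  have hb : ∀ i, A.mulVecLin (b i) = hA.eigenvalues i • b i := by
    intro i
    have : (b i : n → ℝ) = ⇑(hA.eigenvectorBasis i) := by
      simp only [b, Module.Basis.map_apply, OrthonormalBasis.coe_toBasis]
      rfl
    rw [Matrix.mulVecLin_apply, this]
    exact hA.mulVec_eigenvectorBasis i
  rw [finrank_ker_eq_card A.mulVecLin b hA.eigenvalues hb μ]

section Entries

variable {V₁ V₂ : Type*} [Fintype V₁] [DecidableEq V₁] [Fintype V₂] [DecidableEq V₂]
  (G₁ : SimpleGraph V₁) (G₂ : SimpleGraph V₂) [DecidableRel G₁.Adj] [DecidableRel G₂.Adj]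

lemma B_entry1_mem (u : V₁) (e : G₁.edgeSet) (v : V₂) (h : u ∈ (e : Sym2 V₁)) :
    (tEdgeCorona G₁ G₂).adjMatrix ℝ (Sum.inl u) (Sum.inr (Sum.inr (e, v))) = 1 := by
  rw [SimpleGraph.adjMatrix_apply]
  simp [tEdgeCorona, SimpleGraph.fromRel_adj, h]

lemma B_entry1_not_mem (u : V₁) (e : G₁.edgeSet) (v : V₂) (h : ¬ u ∈ (e : Sym2 V₁)) :
    (tEdgeCorona G₁ G₂).adjMatrix ℝ (Sum.inl u) (Sum.inr (Sum.inr (e, v))) = 0 := by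
  rw [SimpleGraph.adjMatrix_apply]
  simp [tEdgeCorona, SimpleGraph.fromRel_adj, h]

lemma B_entry2 (f : G₁.edgeSet) (e : G₁.edgeSet) (v : V₂) :
    (tEdgeCorona G₁ G₂).adjMatrix ℝ (Sum.inr (Sum.inl f)) (Sum.inr (Sum.inr (e, v))) = 0 := by
  rw [SimpleGraph.adjMatrix_apply]
  simp [tEdgeCorona, SimpleGraph.fromRel_adj]

lemma B_entry3_adj (f : G₁.edgeSet) (u : V₂) (e : G₁.edgeSet) (v : V₂)
    (h1 : f = e) (h2 : G₂.Adj u v) :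
    (tEdgeCorona G₁ G₂).adjMatrix ℝ (Sum.inr (Sum.inr (f, u))) (Sum.inr (Sum.inr (e, v))) = 1 := by
  subst h1
  rw [SimpleGraph.adjMatrix_apply]
  simp [tEdgeCorona, SimpleGraph.fromRel_adj, h2, h2.ne, Prod.ext_iff]

lemma B_entry3_not_adj (f : G₁.edgeSet) (u : V₂) (e : G₁.edgeSet) (v : V₂)
    (h : ¬ (f = e ∧ G₂.Adj u v)) :
    (tEdgeCorona G₁ G₂).adjMatrix ℝ (Sum.inr (Sum.inr (f, u))) (Sum.inr (Sum.inr (e, v))) = 0 := by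
  rw [SimpleGraph.adjMatrix_apply]
  have hcomm : G₂.Adj v u ↔ G₂.Adj u v := G₂.adj_comm v u
  by_cases h1 : f = e
  · have h2 : ¬ G₂.Adj u v := fun ha => h ⟨h1, ha⟩
    subst h1
    simp [tEdgeCorona, SimpleGraph.fromRel_adj, h2, hcomm]
  · have h1' : ¬ e = f := fun hh => h1 hh.symm
    simp [tEdgeCorona, SimpleGraph.fromRel_adj, h1, h1']

end Entries

set_option linter.unusedSectionVars false

lemma sum_eq_zero_of_eig {V₂ : Type*} [Fintype V₂] (G₂ : SimpleGraph V₂) [DecidableRel G₂.Adj]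
    (r₂ : ℕ) (hreg₂ : G₂.IsRegularOfDegree r₂) (lam : ℝ) (hlam : lam ≠ (r₂ : ℝ))
    (w : V₂ → ℝ) (hw : (G₂.adjMatrix ℝ) *ᵥ w = lam • w) : ∑ v, w v = 0 := by
  have hrow : ∀ u, ∑ v, (G₂.adjMatrix ℝ) u v = (r₂ : ℝ) := by
    intro u
    have := SimpleGraph.adjMatrix_mulVec_const_apply_of_regular (α := ℝ) (a := 1)
      hreg₂ (v := u)
    simpa [Matrix.mulVec, dotProduct] using this
  have hsym : ∀ a b, (G₂.adjMatrix ℝ) a b = (G₂.adjMatrix ℝ) b a := by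
    intro a b
    by_cases h : G₂.Adj a b
    · simp [SimpleGraph.adjMatrix_apply, h, (G₂.adj_comm a b).1 h]
    · have h' : ¬ G₂.Adj b a := fun hh => h ((G₂.adj_comm b a).1 hh)
      simp [SimpleGraph.adjMatrix_apply, h, h']
  have h1 : ∑ v, ((G₂.adjMatrix ℝ) *ᵥ w) v = (r₂ : ℝ) * ∑ v, w v := by
    calc ∑ v, ((G₂.adjMatrix ℝ) *ᵥ w) v
        = ∑ v, ∑ u, (G₂.adjMatrix ℝ) v u * w u := by
          simp [Matrix.mulVec, dotProduct]
      _ = ∑ u, ∑ v, (G₂.adjMatrix ℝ) v u * w u := Finset.sum_comm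
      _ = ∑ u, (r₂ : ℝ) * w u := by
          refine Finset.sum_congr rfl fun u _ => ?_
          rw [← Finset.sum_mul]
          congr 1
          rw [← hrow u]
          exact Finset.sum_congr rfl fun v _ => hsym v u
      _ = (r₂ : ℝ) * ∑ u, w u := by rw [Finset.mul_sum]
  have h2 : ∑ v, ((G₂.adjMatrix ℝ) *ᵥ w) v = lam * ∑ v, w v := by
    rw [hw]; simp [Finset.mul_sum]
  have h3 : ((r₂ : ℝ) - lam) * ∑ v, w v = 0 := by
    rw [sub_mul, h1.symm.trans h2, sub_self]
  rcases mul_eq_zero.1 h3 with h | h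
  · exact absurd (sub_eq_zero.1 h) (fun hh => hlam hh.symm)
  · exact h

section Corona

variable {V₁ V₂ : Type*} [Fintype V₁] [DecidableEq V₁] [Fintype V₂] [DecidableEq V₂]
  (G₁ : SimpleGraph V₁) (G₂ : SimpleGraph V₂) [DecidableRel G₁.Adj] [DecidableRel G₂.Adj]

/-- extend a family of vectors on the copies of `G₂` by zero -/
def coronaVec (S : Submodule ℝ (V₂ → ℝ)) (c : G₁.edgeSet → S) :
    (V₁ ⊕ (G₁.edgeSet ⊕ G₁.edgeSet × V₂)) → ℝ :=
  Sum.elim (fun _ => 0) (Sum.elim (fun _ => 0) fun p => (c p.1 : V₂ → ℝ) p.2)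

def coronaMap (S : Submodule ℝ (V₂ → ℝ)) :
    (G₁.edgeSet → S) →ₗ[ℝ] ((V₁ ⊕ (G₁.edgeSet ⊕ G₁.edgeSet × V₂)) → ℝ) where
  toFun := coronaVec G₁ S
  map_add' c c' := by
    funext x
    rcases x with u | (f | ⟨e, v⟩) <;> simp [coronaVec]
  map_smul' a c := by
    funext x
    rcases x with u | (f | ⟨e, v⟩) <;> simp [coronaVec]

lemma coronaMap_injective (S : Submodule ℝ (V₂ → ℝ)) :
    Function.Injective (coronaMap G₁ S) := by
  intro c c' h
  funext e
  refine Subtype.ext (funext fun v => ?_)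
  have := congrFun h (Sum.inr (Sum.inr (e, v)))
  simpa [coronaMap, coronaVec] using this

lemma coronaVec_expand (S : Submodule ℝ (V₂ → ℝ)) (c : G₁.edgeSet → S)
    (x : V₁ ⊕ (G₁.edgeSet ⊕ G₁.edgeSet × V₂)) :
    (((tEdgeCorona G₁ G₂).adjMatrix ℝ) *ᵥ coronaVec G₁ S c) x =
      ∑ e : G₁.edgeSet, ∑ v : V₂,
        (tEdgeCorona G₁ G₂).adjMatrix ℝ x (Sum.inr (Sum.inr (e, v))) * (c e : V₂ → ℝ) v := by
  simp [Matrix.mulVec, dotProduct, Fintype.sum_sum_type, Fintype.sum_prod_type,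
    coronaVec]

lemma coronaVec_eigen (r₂ : ℕ) (hreg₂ : G₂.IsRegularOfDegree r₂)
    (lam : ℝ) (hlam : lam ≠ (r₂ : ℝ)) (S : Submodule ℝ (V₂ → ℝ))
    (hS : ∀ w ∈ S, (G₂.adjMatrix ℝ) *ᵥ w = lam • w) (c : G₁.edgeSet → S) :
    ((tEdgeCorona G₁ G₂).adjMatrix ℝ) *ᵥ coronaVec G₁ S c =
      lam • coronaVec G₁ S c := by
  have hz : ∀ e : G₁.edgeSet, ∑ v, (c e : V₂ → ℝ) v = 0 := fun e =>
    sum_eq_zero_of_eig G₂ r₂ hreg₂ lam hlam _ (hS _ (c e).2)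
  funext x
  rw [coronaVec_expand]
  rcases x with u | (f | ⟨f, u⟩)
  · have hinner : ∀ e : G₁.edgeSet, ∑ v : V₂,
        (tEdgeCorona G₁ G₂).adjMatrix ℝ (Sum.inl u) (Sum.inr (Sum.inr (e, v)))
          * (c e : V₂ → ℝ) v = 0 := by
      intro e
      by_cases h : u ∈ (e : Sym2 V₁)
      · rw [← hz e]
        exact Finset.sum_congr rfl fun v _ => by rw [B_entry1_mem G₁ G₂ u e v h, one_mul]
      · exact Finset.sum_eq_zero fun v _ => by rw [B_entry1_not_mem G₁ G₂ u e v h, zero_mul]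
    rw [Finset.sum_eq_zero fun e _ => hinner e]
    simp [coronaVec]
  · rw [Finset.sum_eq_zero fun e _ => Finset.sum_eq_zero fun v _ => by
      rw [B_entry2 G₁ G₂ f e v, zero_mul]]
    simp [coronaVec]
  · rw [Finset.sum_eq_single_of_mem f (Finset.mem_univ f) (fun e _ he =>
      Finset.sum_eq_zero fun v _ => by
        rw [B_entry3_not_adj G₁ G₂ f u e v (fun hh => he hh.1.symm), zero_mul])]
    have hAe := hS _ (c f).2
    have hcf := congrFun hAe u
    have hexp : ((G₂.adjMatrix ℝ) *ᵥ (c f : V₂ → ℝ)) u =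
        ∑ v, (G₂.adjMatrix ℝ) u v * (c f : V₂ → ℝ) v := by
      simp [Matrix.mulVec, dotProduct]
    rw [hexp] at hcf
    have hstep : ∑ v : V₂,
        (tEdgeCorona G₁ G₂).adjMatrix ℝ (Sum.inr (Sum.inr (f, u))) (Sum.inr (Sum.inr (f, v)))
          * (c f : V₂ → ℝ) v = ∑ v, (G₂.adjMatrix ℝ) u v * (c f : V₂ → ℝ) v := by
      refine Finset.sum_congr rfl fun v _ => ?_
      by_cases h : G₂.Adj u v
      · rw [B_entry3_adj G₁ G₂ f u f v rfl h, SimpleGraph.adjMatrix_apply, if_pos h]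
      · rw [B_entry3_not_adj G₁ G₂ f u f v (fun hh => h hh.2),
          SimpleGraph.adjMatrix_apply, if_neg h]
    rw [hstep, hcf]
    simp [coronaVec]

end Corona


/-- Every adjacency eigenvalue `lam ≠ r₂` of the `r₂`-regular graph `G₂`, of
multiplicity `k`, is an adjacency eigenvalue of the T-edge neighbourhood corona
`G₁ ⊟_T G₂` with multiplicity at least `m₁ · k`. -/
theorem adj_eigenvalue_mult_tEdgeCorona {V₁ V₂ : Type*} [Fintype V₁] [DecidableEq V₁]
    [Fintype V₂] [DecidableEq V₂]
    (G₁ : SimpleGraph V₁) (G₂ : SimpleGraph V₂)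
    [DecidableRel G₁.Adj] [DecidableRel G₂.Adj]
    (r₁ r₂ : ℕ) (hreg₁ : G₁.IsRegularOfDegree r₁) (hreg₂ : G₂.IsRegularOfDegree r₂)
    (lam : ℝ) (hlam : lam ≠ (r₂ : ℝ)) (k : ℕ) (hk : 0 < k)
    (hmult : ((G₂.adjMatrix ℝ).charpoly).rootMultiplicity lam = k) :
    Fintype.card G₁.edgeSet * k ≤
      (((tEdgeCorona G₁ G₂).adjMatrix ℝ).charpoly).rootMultiplicity lam := by
    classical
  have hAH : (G₂.adjMatrix ℝ).IsHermitian := by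
    show (G₂.adjMatrix ℝ)ᴴ = G₂.adjMatrix ℝ
    have h : (G₂.adjMatrix ℝ)ᴴ = (G₂.adjMatrix ℝ)ᵀ := by
      ext i j; simp [Matrix.conjTranspose_apply]
    rw [h, SimpleGraph.transpose_adjMatrix]
  have hBH : ((tEdgeCorona G₁ G₂).adjMatrix ℝ).IsHermitian := by
    show ((tEdgeCorona G₁ G₂).adjMatrix ℝ)ᴴ = (tEdgeCorona G₁ G₂).adjMatrix ℝ
    have h : ((tEdgeCorona G₁ G₂).adjMatrix ℝ)ᴴ = ((tEdgeCorona G₁ G₂).adjMatrix ℝ)ᵀ := by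
      ext i j; simp [Matrix.conjTranspose_apply]
    rw [h, SimpleGraph.transpose_adjMatrix]
  set S : Submodule ℝ (V₂ → ℝ) :=
    LinearMap.ker ((G₂.adjMatrix ℝ).mulVecLin - lam • LinearMap.id) with hSdef
  have hmemS : ∀ w ∈ S, (G₂.adjMatrix ℝ) *ᵥ w = lam • w := by
    intro w hw
    rw [hSdef, LinearMap.mem_ker, LinearMap.sub_apply, LinearMap.smul_apply,
      LinearMap.id_apply, sub_eq_zero, Matrix.mulVecLin_apply] at hw
    exact hw
  have hkS : Module.finrank ℝ S = k := by
    rw [hSdef, ← herm_card_eq_finrank hAH lam, ← herm_rootMultiplicity hAH lam, hmult]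
  rw [herm_rootMultiplicity hBH lam, herm_card_eq_finrank hBH lam]
  have hdom : Module.finrank ℝ (G₁.edgeSet → S) = Fintype.card G₁.edgeSet * k := by
    rw [Module.finrank_pi_fintype ℝ]
    simp [hkS, Finset.sum_const, Finset.card_univ]
  have hle : LinearMap.range (coronaMap G₁ S) ≤
      LinearMap.ker (((tEdgeCorona G₁ G₂).adjMatrix ℝ).mulVecLin - lam • LinearMap.id) := by
    rintro _ ⟨c, rfl⟩
    rw [LinearMap.mem_ker, LinearMap.sub_apply, LinearMap.smul_apply, LinearMap.id_apply,
      sub_eq_zero, Matrix.mulVecLin_apply]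
    exact coronaVec_eigen G₁ G₂ r₂ hreg₂ lam hlam S hmemS c
  calc Fintype.card G₁.edgeSet * k
      = Module.finrank ℝ (G₁.edgeSet → S) := hdom.symm
    _ = Module.finrank ℝ (LinearMap.range (coronaMap G₁ S)) :=
        (LinearMap.finrank_range_of_inj (coronaMap_injective G₁ S)).symm
    _ ≤ _ := Submodule.finrank_mono hle
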